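/- Let P be an invertible n×n matrix over a field K such that P · NT_n(K) · P^{-1} ⊆ NT_n(K), where NT_n(K) is the space of strictly upper triangular matrices. Then P is upper triangular. -/
import Mathlib

theorem finStrictMonoId {n : ℕ} (f : Fin n → Fin n) (hf : StrictMono f) : ∀ a, f a = a := by
  have hsurj := Finite.injective_iff_surjective.mp hf.injective
  intro a
  have h1 : ((StrictMono.orderIsoOfSurjective f hf hsurj) a : ℕ) = a :=
    Fin.coe_orderIso_apply _ a
  have h2 : (⇑(StrictMono.orderIsoOfSurjective f hf hsurj)) = f :=
    StrictMono.coe_orderIsoOfSurjective f hf hsurj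
  rw [← h2]
  exact Fin.ext h1

theorem stmt9 {K : Type*} [Field K] (n : ℕ) (P : Matrix (Fin n) (Fin n) K) (hP : IsUnit P)
    (h : ∀ N : Matrix (Fin n) (Fin n) K, (∀ i j : Fin n, j ≤ i → N i j = 0) →
      ∀ i j : Fin n, j ≤ i → (P * N * P⁻¹) i j = 0) :
    ∀ i j : Fin n, j < i → P i j = 0 := by
  classical
  have hdet : IsUnit P.det := (Matrix.isUnit_iff_isUnit_det P).mp hP
  have hQP : P⁻¹ * P = 1 := Matrix.nonsing_inv_mul P hdet
  set Q := P⁻¹ with hQdef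
  -- key entry fact
  have key : ∀ a b : Fin n, a < b → ∀ i j : Fin n, j ≤ i → P i a * Q b j = 0 := by
    intro a b hab i j hij
    have hN : ∀ i j : Fin n, j ≤ i → (Matrix.single a b (1:K)) i j = 0 := by
      intro i j hij
      rw [Matrix.single]
      simp only [Matrix.of_apply, ite_eq_right_iff, and_imp]
      rintro rfl rfl
      exact absurd hij (not_le.2 hab)
    have := h _ hN i j hij
    rw [show P * Matrix.single a b (1:K) * Q = P * (Matrix.single a b (1:K) * Q) from Matrix.mul_assoc _ _ _] at this
    rw [Matrix.mul_apply] at this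
    have hrw : ∀ k, (Matrix.single a b (1:K) * Q) k j
        = if k = a then Q b j else 0 := by
      intro k
      rw [Matrix.mul_apply]
      rw [Finset.sum_eq_single b]
      · rw [Matrix.single]
        simp only [Matrix.of_apply, and_true]
        by_cases hk : k = a
        · simp [hk]
        · simp only [if_neg hk]
          rw [if_neg (fun hh => hk hh.symm), zero_mul]
      · intro c _ hc
        rw [Matrix.single]
        simp [Ne.symm hc]
      · simp
    simp only [hrw, mul_ite, mul_zero] at this
    rwa [Finset.sum_ite_eq' Finset.univ a (fun k => P i k * Q b j), if_pos (Finset.mem_univ a)] at this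
  -- nonzero columns of P and rows of Q
  have colP : ∀ a : Fin n, ∃ i, P i a ≠ 0 := by
    intro a
    by_contra hcon
    push_neg at hcon
    have h0 : (Q * P) a a = 0 := by simp [Matrix.mul_apply, hcon]
    rw [hQP] at h0
    simp at h0
  have rowQ : ∀ b : Fin n, ∃ j, Q b j ≠ 0 := by
    intro b
    by_contra hcon
    push_neg at hcon
    have h0 : (Q * P) b b = 0 := by simp [Matrix.mul_apply, hcon]
    rw [hQP] at h0
    simp at h0
  have hSne : ∀ a : Fin n, (Finset.univ.filter (fun i => P i a ≠ 0)).Nonempty := by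
    intro a; obtain ⟨i, hi⟩ := colP a; exact ⟨i, by simp [hi]⟩
  have hTne : ∀ b : Fin n, (Finset.univ.filter (fun j => Q b j ≠ 0)).Nonempty := by
    intro b; obtain ⟨j, hj⟩ := rowQ b; exact ⟨j, by simp [hj]⟩
  set m : Fin n → Fin n := fun a => (Finset.univ.filter (fun i => P i a ≠ 0)).max' (hSne a) with hm
  set t : Fin n → Fin n := fun b => (Finset.univ.filter (fun j => Q b j ≠ 0)).min' (hTne b) with ht
  have hPm : ∀ a, P (m a) a ≠ 0 := by
    intro a
    have := Finset.max'_mem _ (hSne a)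
    simpa using this
  have hQt : ∀ b, Q b (t b) ≠ 0 := by
    intro b
    have := Finset.min'_mem _ (hTne b)
    simpa using this
  have hle_m : ∀ (a i : Fin n), P i a ≠ 0 → i ≤ m a := by
    intro a i hi
    exact Finset.le_max' _ i (by simp [hi])
  have ht_le : ∀ (b j : Fin n), Q b j ≠ 0 → t b ≤ j := by
    intro b j hj
    exact Finset.min'_le _ j (by simp [hj])
  have step1 : ∀ a b : Fin n, a < b → m a < t b := by
    intro a b hab
    by_contra hcon
    push_neg at hcon
    have := key a b hab (m a) (t b) hcon
    exact (mul_ne_zero (hPm a) (hQt b)) this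
  have step2 : ∀ b : Fin n, t b ≤ m b := by
    intro b
    have h1 : (Q * P) b b = 1 := by rw [hQP]; simp
    rw [Matrix.mul_apply] at h1
    have : ∃ k ∈ Finset.univ, Q b k * P k b ≠ 0 :=
      Finset.exists_ne_zero_of_sum_ne_zero (by rw [h1]; exact one_ne_zero)
    obtain ⟨k, _, hk⟩ := this
    exact le_trans (ht_le b k (left_ne_zero_of_mul hk)) (hle_m b k (right_ne_zero_of_mul hk))
  have hmono : StrictMono m := fun a b hab => lt_of_lt_of_le (step1 a b hab) (step2 b)
  have hid := finStrictMonoId m hmono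
  intro i j hji
  by_contra hne
  have : i ≤ m j := hle_m j i hne
  rw [hid j] at this
  exact absurd hji (not_lt.2 this)
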